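/- Let A be a p-adically complete p-torsion-free ring with an ideal I such that A is I-adically separated, and let w ∈ 1 + I be such that log(w) = 0 in A[1/p] (the logarithm series converging since w^p ∈ 1 + pA after suitable power). If p ≠ 2, then w^p = 1; for general p, w^4 = 1 when p = 2. In particular, in W(R♭) for R♭ perfect, log(w) = 0 with w ∈ 1 + I forces w = ±1, and w = 1 if p ≠ 2. -/

import Mathlib

set_option linter.unusedSectionVars false
set_option maxHeartbeats 1000000

open Polynomial Finset

section Helpers

variable (p : ℕ) [Fact p.Prime] (A : Type*) [CommRing A] [Algebra ℤ_[p] A]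

lemma padic_unit_of_not_dvd {n : ℕ} (hn : ¬ p ∣ n) : IsUnit (n : ℤ_[p]) := by
  rw [PadicInt.isUnit_iff]
  have h1 : ‖(n : ℤ_[p])‖ ≤ 1 := PadicInt.norm_le_one _
  have h2 : ¬ ‖(n : ℤ_[p])‖ < 1 := by
    rw [show ((n:ℤ_[p])) = ((n : ℤ) : ℤ_[p]) by push_cast; ring,
      PadicInt.norm_int_lt_one_iff_dvd]
    exact_mod_cast hn
  linarith [lt_or_eq_of_le h1]

lemma A_unit_of_not_dvd {n : ℕ} (hn : ¬ p ∣ n) : IsUnit (n : A) := by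
  have := (padic_unit_of_not_dvd p hn).map (algebraMap ℤ_[p] A)
  rwa [map_natCast] at this

lemma p_unit_B : IsUnit ((p : ℕ) : Localization.Away (p : A)) := by
  have := IsLocalization.map_units (M := Submonoid.powers (p:A))
    (Localization.Away (p:A)) ⟨(p:A), Submonoid.mem_powers _⟩
  rwa [show ((⟨(p:A), Submonoid.mem_powers _⟩ : Submonoid.powers (p:A)) : A) = ((p:ℕ):A) from rfl,
    map_natCast] at this

lemma B_nat_unit : ∀ n : ℕ, n ≠ 0 → IsUnit ((n : ℕ) : Localization.Away (p : A)) := by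
  intro n
  induction n using Nat.strong_induction_on with
  | _ n ih =>
    intro hn
    by_cases hdvd : p ∣ n
    · obtain ⟨k, rfl⟩ := hdvd
      have hk : k ≠ 0 := by rintro rfl; simp at hn
      have hk2 : k < p * k := by
        have h2 := (Fact.out : p.Prime).two_le
        calc k = 1 * k := (one_mul k).symm
        _ < p * k := by have := Nat.pos_of_ne_zero hk; nlinarith
      have := (p_unit_B p A).mul (ih k hk2 hk)
      rwa [show ((p*k : ℕ) : Localization.Away (p:A)) = (p:ℕ) * (k:ℕ) by push_cast; ring]
    · have := (A_unit_of_not_dvd p A hdvd).map (algebraMap A (Localization.Away (p:A)))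
      rwa [map_natCast] at this

lemma B_int_unit : ∀ n : ℤ, n ≠ 0 → IsUnit ((n : ℤ) : Localization.Away (p : A)) := by
  intro n hn
  have h := B_nat_unit p A n.natAbs (by simpa using hn)
  rcases n.natAbs_eq with h2 | h2
  · rw [h2, Int.cast_natCast]; exact h
  · rw [h2, Int.cast_neg, Int.cast_natCast]; exact h.neg

noncomputable def ratHom : ℚ →+* Localization.Away (p : A) :=
  IsLocalization.lift (M := nonZeroDivisors ℤ) (S := ℚ)
    (g := Int.castRingHom (Localization.Away (p:A)))
    (fun y => B_int_unit p A y (nonZeroDivisors.coe_ne_zero y))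

end Helpers

noncomputable def Lpoly (N : ℕ) : Polynomial ℚ :=
  ∑ k ∈ Finset.range N, Polynomial.C ((-1)^k / (k+1) : ℚ) * Polynomial.X ^ (k+1)

lemma derivative_Lpoly (N : ℕ) :
    derivative (Lpoly N) = ∑ k ∈ Finset.range N, (-X : ℚ[X])^k := by
  rw [Lpoly, map_sum]
  refine Finset.sum_congr rfl fun k _ => ?_
  rw [derivative_C_mul_X_pow]
  have hc : ((-1:ℚ)^k / ((k:ℚ)+1) * ((k+1:ℕ):ℚ)) = (-1:ℚ)^k := by
    push_cast
    field_simp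
  rw [hc, Nat.add_sub_cancel, map_pow, map_neg, map_one,
    show (-X:ℚ[X]) = (-1) * X by ring, mul_pow]

lemma geom_identity (N : ℕ) (R : Type*) [CommRing R] (x : R) :
    (1 + x) * (∑ k ∈ Finset.range N, (-x)^k) = 1 - (-x)^N := by
  have h := geom_sum_mul (-x) N
  have h2 : (-x - 1) = -(1+x) := by ring
  rw [h2] at h
  have h3 := congrArg Neg.neg h
  simp only [neg_sub, ← neg_mul, neg_neg] at h3
  rw [mul_comm] at h3 ⊢
  linear_combination h3

lemma eval_Lpoly_zero (N : ℕ) : (Lpoly N).eval 0 = 0 := by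
  simp [Lpoly, eval_finset_sum]

lemma key_dvd (q N : ℕ) (hq : 1 ≤ q) :
    (X:ℚ[X])^(N+1) ∣ ((Lpoly N).comp ((1+X)^q - 1) - C (q:ℚ) * Lpoly N) := by
  set P : ℚ[X] := (1+X)^q - 1 with hPdef
  set E : ℚ[X] := (Lpoly N).comp P - C (q:ℚ) * Lpoly N with hEdef
  set G : ℚ[X] := ∑ k ∈ Finset.range N, (-X)^k with hGdef
  have hXP : (X:ℚ[X]) ∣ P := by
    rw [X_dvd_iff, hPdef]
    simp only [coeff_sub, coeff_one, if_neg one_ne_zero, coeff_zero_eq_eval_zero]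
    simp
  have h1P : 1 + P = (1+X)^q := by rw [hPdef]; ring
  have hPd : derivative P = C (q:ℚ) * (1+X)^(q-1) := by
    rw [hPdef, derivative_sub, derivative_one, derivative_pow, derivative_add,
      derivative_one, derivative_X]
    simp [C_eq_natCast]
  have hDE : derivative E = C (q:ℚ) * (1+X)^(q-1) * G.comp P - C (q:ℚ) * G := by
    rw [hEdef, derivative_sub, derivative_comp, derivative_mul, derivative_C,
      derivative_Lpoly, hPd, ← hGdef]
    ring
  have hGP : (1 + P) * G.comp P = 1 - (-P)^N := by
    have := congrArg (fun f => f.comp P) (geom_identity N ℚ[X] X)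
    simpa only [mul_comp, add_comp, one_comp, X_comp, sub_comp, pow_comp, neg_comp,
      ← hGdef] using this
  have hpow : (1+X:ℚ[X])^q = (1+X)^(q-1) * (1+X) := by
    conv_lhs => rw [show q = (q-1) + 1 by omega]
    rw [pow_succ]
  have hD : (1+X:ℚ[X])^q * derivative E = C (q:ℚ) * (1+X)^(q-1) * ((-X)^N - (-P)^N) := by
    rw [hDE, mul_sub]
    have e1 : (1+X:ℚ[X])^q * (C (q:ℚ) * (1+X)^(q-1) * G.comp P)
        = C (q:ℚ) * (1+X)^(q-1) * ((1+P) * G.comp P) := by rw [h1P]; ring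
    have e2 : (1+X:ℚ[X])^q * (C (q:ℚ) * G) = C (q:ℚ) * (1+X)^(q-1) * ((1+X) * G) := by
      rw [hpow]; ring
    rw [e1, e2, hGP, geom_identity]
    ring
  have hXN : (X:ℚ[X])^N ∣ (-X)^N - (-P)^N := by
    have h2 : (X:ℚ[X])^N ∣ (-P)^N := pow_dvd_pow_of_dvd (dvd_neg.mpr hXP) N
    have h1 : (X:ℚ[X])^N ∣ (-X)^N := pow_dvd_pow_of_dvd (dvd_neg.mpr dvd_rfl) N
    exact dvd_sub h1 h2
  have hcopX : IsCoprime (X:ℚ[X]) (1+X) := ⟨-1, 1, by ring⟩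
  have hcop : IsCoprime ((X:ℚ[X])^N) ((1+X)^q) := hcopX.pow
  have hDN : (X:ℚ[X])^N ∣ derivative E := by
    have : (X:ℚ[X])^N ∣ (1+X)^q * derivative E := hD ▸ Dvd.dvd.mul_left hXN _
    exact hcop.dvd_of_dvd_mul_left this
  rw [X_pow_dvd_iff]
  intro d hd
  match d with
  | 0 =>
    rw [coeff_zero_eq_eval_zero, hEdef]
    simp only [eval_sub, eval_comp, eval_mul, eval_C]
    rw [show P.eval 0 = 0 by rw [hPdef]; simp, eval_Lpoly_zero]
    ring
  | (d+1) =>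
    have hd' : d < N := by omega
    have h0 : (derivative E).coeff d = 0 := by
      rw [X_pow_dvd_iff] at hDN
      exact hDN d hd'
    rw [coeff_derivative] at h0
    rcases mul_eq_zero.mp h0 with h | h
    · exact h
    · exact absurd h (by positivity)

lemma arith_base (c : ℕ) : c * (2*c + 1) ≤ 2^(2*c) := by
  induction c with
  | zero => simp
  | succ c ih =>
    have h1 : (1:ℕ) ≤ 2^(2*c) := Nat.one_le_two_pow
    have h6 : 2*c + 1 ≤ 2^(2*c) := (Nat.lt_two_pow_self (n := (2*c)))
    have hih : 2*c^2 + c ≤ 2^(2*c) := by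
      calc 2*c^2 + c = c * (2*c+1) := by ring
      _ ≤ 2^(2*c) := ih
    have hexp : (c+1)*(2*(c+1)+1) = 2*c^2 + 5*c + 3 := by ring
    have h4 : 2^(2*(c+1)) = 4 * 2^(2*c) := by ring
    omega

lemma arith1 (c : ℕ) : ∀ f, c * (f + 2*c + 1) ≤ 2^(f + 2*c) := by
  intro f
  induction f with
  | zero => simpa using arith_base c
  | succ f ih =>
    have hc : c ≤ 2^(f + 2*c) := by
      calc c ≤ 2^c := Nat.le_of_lt ((Nat.lt_two_pow_self (n := c)))
      _ ≤ 2^(f + 2*c) := Nat.pow_le_pow_right (by norm_num) (by omega)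
    calc c * (f + 1 + 2*c + 1) = c * (f + 2*c + 1) + c := by ring
    _ ≤ 2^(f + 2*c) + 2^(f + 2*c) := Nat.add_le_add ih hc
    _ = 2^(f + 1 + 2*c) := by ring

lemma val_le (p : ℕ) (hp : 2 ≤ p) (k : ℕ) : (k+1).factorization p ≤ k := by
  have h1 : p ^ ((k+1).factorization p) ∣ k + 1 := Nat.ordProj_dvd _ _
  have h2 : p ^ ((k+1).factorization p) ≤ k + 1 := Nat.le_of_dvd (by omega) h1
  have h3 : 2 ^ ((k+1).factorization p) ≤ p ^ ((k+1).factorization p) :=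
    Nat.pow_le_pow_left hp _
  have h4 : k + 1 ≤ 2^k := (Nat.lt_two_pow_self (n := k))
  by_contra hcon
  push_neg at hcon
  have h5 : 2^(k+1) ≤ 2^((k+1).factorization p) := Nat.pow_le_pow_right (by norm_num) hcon
  have h6 : 2^k < 2^(k+1) := Nat.pow_lt_pow_right (by norm_num) (by omega)
  omega

lemma denom_dvd (p : ℕ) (hp : p.Prime) (e N k : ℕ) (hk : k < N) (hN : N < p^e) :
    (k+1) ∣ p^e * (N.factorial / p^(N.factorial.factorization p)) := by
  set v := (k+1).factorization p with hv
  have hsplit : p ^ v * ((k+1) / p^v) = k + 1 := Nat.ordProj_mul_ordCompl_eq_self _ _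
  have hve : v ≤ e := by
    have h1 : p ^ v ≤ k + 1 := Nat.le_of_dvd (by omega) (Nat.ordProj_dvd _ _)
    by_contra hcon
    push_neg at hcon
    have : p ^ e < p ^ v := Nat.pow_lt_pow_right hp.one_lt hcon
    omega
  have hm'' : ¬ p ∣ ((k+1) / p^v) := Nat.not_dvd_ordCompl hp (by omega)
  have hdvdfac : (k+1) ∣ N.factorial := Nat.dvd_factorial (by omega) (by omega)
  have hm'fac : ((k+1) / p^v) ∣ N.factorial := dvd_trans (Nat.ordCompl_dvd _ _) hdvdfac
  have hcop : Nat.Coprime ((k+1) / p^v) (p ^ (N.factorial.factorization p)) :=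
    Nat.Coprime.pow_right _ ((Nat.coprime_comm).mp (hp.coprime_iff_not_dvd.mpr hm''))
  have hsplit2 : p ^ (N.factorial.factorization p) * (N.factorial / p^(N.factorial.factorization p)) = N.factorial :=
    Nat.ordProj_mul_ordCompl_eq_self _ _
  have hm'u : ((k+1) / p^v) ∣ (N.factorial / p^(N.factorial.factorization p)) := by
    refine hcop.dvd_of_dvd_mul_left ?_
    rw [hsplit2]
    exact hm'fac
  calc (k+1) = p^v * ((k+1)/p^v) := hsplit.symm
  _ ∣ p^e * (N.factorial / p^(N.factorial.factorization p)) :=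
      mul_dvd_mul (pow_dvd_pow p hve) hm'u

lemma iterate_div {A : Type*} [CommRing A] (P z c a : A) (m : ℕ)
    (h : z * (1 + P * c) = P^m * a) : ∃ d, z = P^m * d := by
  have key : ∀ j, ∃ u v : A, z = P^m * u + P^j * (v * z) := by
    intro j
    induction j with
    | zero => exact ⟨0, 1, by ring⟩
    | succ j ih =>
      obtain ⟨u, v, huv⟩ := ih
      have hz : z = P^m * a - P * (c * z) := by linear_combination h
      refine ⟨u + P^j * (v * a), -(v * c), ?_⟩
      calc z = P^m * u + P^j * (v * z) := huv
      _ = P^m * u + P^j * (v * (P^m * a - P * (c*z))) := by rw [← hz]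
      _ = P^m * (u + P^j * (v * a)) + P^(j+1) * (-(v*c) * z) := by ring
  obtain ⟨u, v, huv⟩ := key m
  exact ⟨u + v * z, by linear_combination huv⟩

lemma ptf {A : Type*} [CommRing A] (p : ℕ) (htf : ∀ a : A, (p:A) * a = 0 → a = 0) :
    ∀ (n : ℕ) (a : A), (p:A)^n * a = 0 → a = 0 := by
  intro n
  induction n with
  | zero => intro a h; simpa using h
  | succ n ih =>
    intro a h
    refine ih a (htf _ ?_)
    rw [← h]; ring

lemma aeval_Lpoly {B : Type*} [CommRing B] [Algebra ℚ B] (b : B) (n : ℕ) :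
    Polynomial.aeval b (Lpoly n)
      = ∑ k ∈ Finset.range n, ((-1:B)^k) * Ring.inverse ((k+1 : ℕ) : B) * b^(k+1) := by
  rw [Lpoly, map_sum]
  refine Finset.sum_congr rfl fun k _ => ?_
  rw [map_mul, map_pow, Polynomial.aeval_X, Polynomial.aeval_C]
  congr 1
  have hcast : ((k+1:ℕ):B) = algebraMap ℚ B ((k+1:ℕ):ℚ) := by rw [map_natCast]
  have hk0 : ((k+1:ℕ):ℚ) ≠ 0 := by positivity
  have hu : IsUnit ((k+1:ℕ):B) := by
    rw [hcast]
    exact (isUnit_iff_ne_zero.mpr hk0).map (algebraMap ℚ B)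
  have h1 : algebraMap ℚ B ((-1)^k/(k+1) : ℚ) * ((k+1:ℕ):B) = (-1:B)^k := by
    rw [hcast, ← map_mul]
    have : ((-1)^k/(k+1) : ℚ) * ((k+1:ℕ):ℚ) = (-1)^k := by
      push_cast
      field_simp
    rw [this]
    simp
  have h2 : ((-1:B)^k * Ring.inverse ((k+1:ℕ):B)) * ((k+1:ℕ):B) = (-1:B)^k := by
    rw [mul_assoc, Ring.inverse_mul_cancel _ hu, mul_one]
  exact hu.mul_right_cancel (h1.trans h2.symm)

lemma pow_sub_one_eq {A : Type*} [CommRing A] (x : A) (M : ℕ) (hM : 1 ≤ M) :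
    (1 + x)^M - 1 = ∑ k ∈ Finset.Ico 1 (M+1), x^k * (M.choose k : A) := by
  rw [add_comm, add_pow]
  simp only [one_pow, mul_one]
  rw [Finset.range_eq_Ico, Finset.sum_eq_sum_Ico_succ_bot (by omega)]
  simp

theorem stmt_4 (p : ℕ) [Fact p.Prime] (A : Type*) [CommRing A] [Algebra ℤ_[p] A]
    (I : Ideal A) (w : A) (hw : w - 1 ∈ I)
    (htf : ∀ a : A, (p : A) * a = 0 → a = 0)
    (hsep : ∀ a : A, (∀ m : ℕ, a ∈ Ideal.span {(p : A) ^ m}) → a = 0)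
    (hIsep : ∀ a : A, (∀ m : ℕ, a ∈ I ^ m) → a = 0)
    (hcomp : IsAdicComplete (Ideal.span {(p : A)}) A)
    -- log (w) = 0 : the partial sums of the log series tend to 0 p-adically in A[1/p]
    (hlog : ∀ m : ℕ, ∃ N : ℕ, ∀ n ≥ N, ∃ a : A,
        (∑ k ∈ Finset.range n, ((-1 : Localization.Away (p : A)) ^ k) *
            Ring.inverse ((k + 1 : ℕ) : Localization.Away (p : A)) *
            (algebraMap A (Localization.Away (p : A)) (w - 1)) ^ (k + 1)) =
          algebraMap A (Localization.Away (p : A)) ((p : A) ^ m * a))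
    -- no nontrivial p-th roots of unity congruent to 1 (Witt vectors of a perfect ring)
    (hpth : ∀ v : A, v - 1 ∈ I → v ^ p = 1 → v = 1)
    -- for p = 2, the only fourth roots of unity are ±1
    (h4 : p = 2 → ∀ v : A, v ^ 4 = 1 → v = 1 ∨ v = -1) :
    (p ≠ 2 → w ^ p = 1) ∧ (p = 2 → w ^ 4 = 1) ∧ (w = 1 ∨ w = -1) ∧ (p ≠ 2 → w = 1) := by
  classical
  have hppr : p.Prime := Fact.out
  have hp2 : 2 ≤ p := hppr.two_le
  -- it suffices to prove w = 1
  suffices hw1 : w = 1 by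
    exact ⟨fun _ => by rw [hw1, one_pow], fun _ => by rw [hw1, one_pow],
      Or.inl hw1, fun _ => hw1⟩
  -- descent lemmas
  have hwj : ∀ j : ℕ, w^j - 1 ∈ I := by
    intro j
    induction j with
    | zero => simpa using I.zero_mem
    | succ j ih =>
      have h : w^(j+1) - 1 = w^j * (w - 1) + (w^j - 1) := by ring
      rw [h]
      exact Ideal.add_mem _ (Ideal.mul_mem_left _ _ hw) ih
  have hdesc : ∀ t : ℕ, w^(p^t) = 1 → w = 1 := by
    intro t
    induction t with
    | zero => intro h; simpa using h
    | succ t ih =>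
      intro h
      refine ih (hpth (w^(p^t)) (hwj _) ?_)
      rw [← pow_mul, ← pow_succ]
      exact h
  set φ := algebraMap A (Localization.Away (p:A)) with hφ
  -- injectivity of φ
  have hinj : Function.Injective φ := by
    intro a b hab
    have h0 : φ (a - b) = 0 := by rw [map_sub, hab, sub_self]
    rw [hφ, IsLocalization.map_eq_zero_iff (Submonoid.powers (p:A))] at h0
    obtain ⟨⟨mm, n, hn⟩, hm⟩ := h0
    simp only at hm
    have h1 : (p:A)^n * (a-b) = 0 := by rw [show (p:A)^n = mm from hn]; exact hm
    have h2 := ptf p htf n _ h1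
    exact sub_eq_zero.mp h2
  set x := w - 1 with hxdef
  obtain ⟨N₁, hN₁⟩ := hlog 1
  set n₀ := N₁ + 1 with hn₀def
  -- basic divisibility of powers of x
  have hx1 : ∀ i, n₀ ≤ i → ∃ c, x^i = (p:A) * c := by
    intro i hi
    obtain ⟨n, rfl⟩ : ∃ n, i = n + 1 := ⟨i - 1, by omega⟩
    have hn : N₁ ≤ n := by omega
    obtain ⟨a, ha⟩ := hN₁ n hn
    obtain ⟨a', ha'⟩ := hN₁ (n+1) (by omega)
    have hdiff : ((-1: Localization.Away (p:A))^n)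
        * Ring.inverse ((n+1:ℕ): Localization.Away (p:A)) * (φ x)^(n+1)
        = φ ((p:A)^1 * a') - φ ((p:A)^1 * a) := by
      rw [← ha, ← ha', Finset.sum_range_succ]
      ring
    have hu : IsUnit ((n+1:ℕ): Localization.Away (p:A)) := B_nat_unit p A (n+1) (by omega)
    refine ⟨(-1:A)^n * ((n+1:ℕ):A) * ((p:A)^0 * a' - (p:A)^0 * a) , ?_⟩
    apply hinj
    have hcancel : ((n+1:ℕ): Localization.Away (p:A)) * Ring.inverse ((n+1:ℕ): Localization.Away (p:A)) = 1 :=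
      Ring.mul_inverse_cancel _ hu
    have hneg : ((-1: Localization.Away (p:A))^n) * ((-1: Localization.Away (p:A))^n) = 1 := by
      rw [← pow_add]
      exact Even.neg_one_pow ⟨n, rfl⟩
    have hkey : (φ x)^(n+1) = ((-1: Localization.Away (p:A))^n * ((n+1:ℕ): Localization.Away (p:A)))
        * (φ ((p:A)^1 * a') - φ ((p:A)^1 * a)) := by
      calc (φ x)^(n+1)
          = (((-1: Localization.Away (p:A))^n * (-1: Localization.Away (p:A))^n)
            * (((n+1:ℕ): Localization.Away (p:A)) * Ring.inverse ((n+1:ℕ): Localization.Away (p:A))))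
            * (φ x)^(n+1) := by rw [hneg, hcancel]; ring
        _ = ((-1: Localization.Away (p:A))^n * ((n+1:ℕ): Localization.Away (p:A)))
            * (((-1: Localization.Away (p:A))^n) * Ring.inverse ((n+1:ℕ): Localization.Away (p:A)) * (φ x)^(n+1)) := by ring
        _ = ((-1: Localization.Away (p:A))^n * ((n+1:ℕ): Localization.Away (p:A)))
            * (φ ((p:A)^1 * a') - φ ((p:A)^1 * a)) := by rw [hdiff]
    rw [map_pow, hkey,
      show ((-1: Localization.Away (p:A))^n) = φ ((-1:A)^n) by rw [map_pow, map_neg, map_one],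
      show ((n+1:ℕ): Localization.Away (p:A)) = φ (((n+1:ℕ):A)) from (map_natCast φ _).symm,
      ← map_sub, ← map_mul, ← map_mul]
    congr 1
    ring
  -- growth of divisibility
  have hxk : ∀ k i, k * n₀ ≤ i → ∃ c, x^i = (p:A)^k * c := by
    intro k
    induction k with
    | zero => intro i _; exact ⟨x^i, by simp⟩
    | succ k ih =>
      intro i hi
      have hsm : (k+1)*n₀ = k*n₀ + n₀ := by ring
      have h1 : k * n₀ ≤ i - n₀ := by omega
      obtain ⟨c₁, hc₁⟩ := ih (i - n₀) h1
      obtain ⟨c₂, hc₂⟩ := hx1 n₀ le_rfl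
      refine ⟨c₂ * c₁, ?_⟩
      have hsplit : i = n₀ + (i - n₀) := by omega
      calc x^i = x^(n₀ + (i - n₀)) := by rw [← hsplit]
      _ = x^n₀ * x^(i - n₀) := pow_add x _ _
      _ = ((p:A) * c₂) * ((p:A)^k * c₁) := by rw [hc₂, hc₁]
      _ = (p:A)^(k+1) * (c₂ * c₁) := by rw [pow_succ]; ring
  -- w = 1 + x
  have hw1x : w = 1 + x := by rw [hxdef]; ring
  have hn0pow : n₀ ≤ p^n₀ := by
    calc n₀ ≤ 2^n₀ := Nat.le_of_lt ((Nat.lt_two_pow_self (n := n₀)))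
    _ ≤ p^n₀ := Nat.pow_le_pow_left hp2 n₀
  have hpn₀1 : 1 ≤ p^n₀ := Nat.one_le_pow _ _ (by omega)
  -- stage 1 : w^(p^n₀) - 1 ∈ pA
  have hstage1 : ∃ c, w^(p^n₀) - 1 = (p:A) * c := by
    have hmem : (w^(p^n₀) - 1) ∈ Ideal.span {(p:A)} := by
      rw [hw1x, pow_sub_one_eq x (p^n₀) hpn₀1]
      refine Ideal.sum_mem _ fun k hk => ?_
      rw [Finset.mem_Ico] at hk
      rcases eq_or_lt_of_le (show k ≤ p^n₀ by omega) with hke | hkl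
      · obtain ⟨c, hc⟩ := hx1 (p^n₀) hn0pow
        rw [hke, hc]
        rw [Ideal.mem_span_singleton]
        exact ⟨c * ((p^n₀).choose (p^n₀) : A), by ring⟩
      · have hd : p ∣ (p^n₀).choose k := hppr.dvd_choose_pow (by omega) (by omega)
        obtain ⟨t, ht⟩ := hd
        rw [Ideal.mem_span_singleton]
        refine ⟨x^k * (t:A), ?_⟩
        rw [show ((p^n₀).choose k : A) = ((p * t : ℕ):A) by rw [ht], Nat.cast_mul]
        ring
    rw [Ideal.mem_span_singleton] at hmem
    obtain ⟨c, hc⟩ := hmem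
    exact ⟨c, hc⟩
  obtain ⟨c1, hc1⟩ := hstage1
  -- stage 2 : z := w^(p^(n₀+1)) - 1 ∈ p²A
  set q := p^(n₀+1) with hqdef
  have hq1 : 1 ≤ q := Nat.one_le_pow _ _ (by omega)
  set z := w^q - 1 with hzdef
  have hstage2 : ∃ d, z = (p:A)^2 * d := by
    have hwq : w^q = (w^(p^n₀))^p := by
      rw [← pow_mul, ← pow_succ]
    have hw2 : w^(p^n₀) = 1 + (p:A) * c1 := by linear_combination hc1
    have hmem : z ∈ Ideal.span {(p:A)^2} := by
      rw [hzdef, hwq, hw2, pow_sub_one_eq ((p:A) * c1) p (by omega)]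
      refine Ideal.sum_mem _ fun k hk => ?_
      rw [Finset.mem_Ico] at hk
      rcases eq_or_lt_of_le (show 1 ≤ k from hk.1) with hke | hkl
      · rw [← hke, pow_one, Nat.choose_one_right]
        rw [Ideal.mem_span_singleton]
        exact ⟨c1, by push_cast; ring⟩
      · rw [Ideal.mem_span_singleton]
        refine ⟨(p:A)^(k-2) * c1^k * ((p.choose k : A)), ?_⟩
        rw [mul_pow]
        rw [show (p:A)^k = (p:A)^2 * (p:A)^(k-2) by rw [← pow_add]; congr 1; omega]
        ring
    rw [Ideal.mem_span_singleton] at hmem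
    obtain ⟨d, hd⟩ := hmem
    exact ⟨d, hd⟩
  obtain ⟨d, hz2⟩ := hstage2
  -- main claim: z is divisible by all powers of p
  have hmain : ∀ m : ℕ, ∃ dd, z = (p:A)^m * dd := by
    intro m
    obtain ⟨N₀, hN₀⟩ := hlog m
    letI : Algebra ℚ (Localization.Away (p:A)) := (ratHom p A).toAlgebra
    obtain ⟨cb, hcbdef⟩ : ∃ t, t = n₀ * (m + 1) + 1 := ⟨_, rfl⟩
    obtain ⟨e, hedef⟩ : ∃ t, t = N₀ + 2 * cb := ⟨_, rfl⟩
    have hpe1 : 1 ≤ p^e := Nat.one_le_pow _ _ (by omega)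
    obtain ⟨N, hNdef⟩ : ∃ t, t = p^e - 1 := ⟨_, rfl⟩
    have hNsucc : N + 1 = p^e := by omega
    have h2e : 2^e ≤ p^e := Nat.pow_le_pow_left hp2 e
    have harith : cb * (e + 1) ≤ 2^e := by
      have h1 := arith1 cb N₀
      rw [hedef]
      exact h1
    have hegrow : n₀ * (m + e) + 1 ≤ 2^e := by
      have hexp : cb * (e+1) = n₀*m*e + n₀*m + n₀*e + n₀ + e + 1 := by rw [hcbdef]; ring
      have hexp2 : n₀ * (m+e) + 1 = n₀*m + n₀*e + 1 := by ring
      nlinarith [Nat.zero_le (n₀*m*e)]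
    have hNN₀ : N₀ ≤ N := by
      have h3 : e < 2^e := (Nat.lt_two_pow_self (n := e))
      omega
    have hN1 : 1 ≤ N := by
      have h3 : e < 2^e := (Nat.lt_two_pow_self (n := e))
      have h5 : 2 ≤ e := by omega
      omega
    obtain ⟨cx, hcx⟩ := hxk (m+e) (N+1) (by
      rw [hNsucc]
      calc (m+e) * n₀ = n₀ * (m+e) := Nat.mul_comm _ _
      _ ≤ 2^e := by omega
      _ ≤ p^e := h2e)
    obtain ⟨sa, hsa⟩ := hN₀ N hNN₀
    -- Λ and units
    obtain ⟨u, hudef⟩ : ∃ t, t = N.factorial / p^(N.factorial.factorization p) := ⟨_, rfl⟩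
    have hu0 : 0 < u := hudef ▸ Nat.ordCompl_pos p (Nat.factorial_ne_zero N)
    have hundvd : ¬ p ∣ u := hudef ▸ Nat.not_dvd_ordCompl hppr (Nat.factorial_ne_zero N)
    have huA : IsUnit ((u:ℕ):A) := A_unit_of_not_dvd p A hundvd
    obtain ⟨ui, hui⟩ := huA.exists_right_inv
    obtain ⟨Λ, hΛdef⟩ : ∃ t, t = p^e * u := ⟨_, rfl⟩
    have hΛ0 : Λ ≠ 0 := by
      have h7 : 0 < p^e := hpe1
      rw [hΛdef]
      positivity
    have hdvdΛ : ∀ k, k < N → (k+1) ∣ Λ := fun k hk =>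
      hΛdef ▸ hudef ▸ denom_dvd p hppr e N k hk (by omega)
    -- polynomial data
    obtain ⟨R, hR⟩ := key_dvd q N hq1
    obtain ⟨Epoly, hEpoly⟩ : ∃ E : ℚ[X],
      E = (Lpoly N).comp ((1+X)^q - 1) - Polynomial.C (q:ℚ) * Lpoly N := ⟨_, rfl⟩
    obtain ⟨F₀, hF₀def⟩ : ∃ F : Polynomial ℤ, F = ∑ k ∈ Finset.range N,
      Polynomial.C ((-1)^k * ((Λ/(k+1) : ℕ) : ℤ)) * Polynomial.X^(k+1) := ⟨_, rfl⟩
    have hF₀map : F₀.map (Int.castRingHom ℚ) = Polynomial.C (Λ:ℚ) * Lpoly N := by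
      rw [hF₀def, Polynomial.map_sum, Lpoly, Finset.mul_sum]
      refine Finset.sum_congr rfl fun k hk => ?_
      rw [Polynomial.map_mul, Polynomial.map_pow, Polynomial.map_X, Polynomial.map_C,
        ← mul_assoc, ← Polynomial.C_mul]
      congr 2
      have hdv := hdvdΛ k (Finset.mem_range.mp hk)
      have hk0 : ((k+1:ℕ):ℚ) ≠ 0 := by positivity
      have hcd : ((Λ/(k+1):ℕ):ℚ) = (Λ:ℚ)/((k+1:ℕ):ℚ) := Nat.cast_div hdv hk0
      rw [map_mul, map_pow, map_neg, map_one, map_natCast, hcd, Nat.cast_add, Nat.cast_one]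
      ring
    obtain ⟨Pz, hPzdef⟩ : ∃ t : Polynomial ℤ, t = (1+Polynomial.X)^q - 1 := ⟨_, rfl⟩
    obtain ⟨F₁, hF₁def⟩ : ∃ t : Polynomial ℤ, t = F₀.comp Pz - Polynomial.C (q:ℤ) * F₀ := ⟨_, rfl⟩
    have hPzmap : Pz.map (Int.castRingHom ℚ) = (1+Polynomial.X)^q - 1 := by
      rw [hPzdef]
      simp [Polynomial.map_sub, Polynomial.map_pow, Polynomial.map_add, Polynomial.map_one,
        Polynomial.map_X]
    have hF₁map : F₁.map (Int.castRingHom ℚ) = Polynomial.C (Λ:ℚ) * Epoly := by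
      rw [hF₁def, Polynomial.map_sub, Polynomial.map_comp, hF₀map, hPzmap,
        Polynomial.map_mul, hF₀map, Polynomial.map_C, hEpoly, Polynomial.mul_comp,
        Polynomial.C_comp, map_natCast (Int.castRingHom ℚ) q]
      ring
    have hCE : Polynomial.C (Λ:ℚ) * Epoly = Polynomial.X^(N+1) * (Polynomial.C (Λ:ℚ) * R) := by
      rw [hEpoly, hR]
      ring
    have hlift : (Polynomial.C (Λ:ℚ) * R) ∈ Polynomial.lifts (Int.castRingHom ℚ) := by
      rw [Polynomial.lifts_iff_coeff_lifts]
      intro j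
      refine ⟨F₁.coeff (j+(N+1)), ?_⟩
      calc (Int.castRingHom ℚ) (F₁.coeff (j+(N+1)))
          = (F₁.map (Int.castRingHom ℚ)).coeff (j+(N+1)) := (Polynomial.coeff_map _ _).symm
        _ = (Polynomial.X^(N+1) * (Polynomial.C (Λ:ℚ) * R)).coeff (j+(N+1)) := by
            rw [hF₁map, hCE]
        _ = (Polynomial.C (Λ:ℚ) * R).coeff j := Polynomial.coeff_X_pow_mul _ _ _
    obtain ⟨G, hG⟩ := (Polynomial.mem_lifts _).mp hlift
    -- evaluations
    have haevalG : Polynomial.aeval (φ x) (G.map (Int.castRingHom ℚ)) = φ (Polynomial.aeval x G) := by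
      rw [Polynomial.aeval_def, Polynomial.eval₂_map]
      have hhoms : ((algebraMap ℚ (Localization.Away (p:A))).comp (Int.castRingHom ℚ))
          = (RingHom.comp φ (Int.castRingHom A)) := RingHom.ext_int _ _
      rw [hhoms, ← Polynomial.hom_eval₂]
      congr 1
    have hΛunit : IsUnit ((Λ:ℕ): Localization.Away (p:A)) := B_nat_unit p A Λ hΛ0
    have hCmul : Polynomial.aeval (φ x) (Polynomial.C ((Λ:ℕ):ℚ) * Epoly)
        = ((Λ:ℕ): Localization.Away (p:A)) * Polynomial.aeval (φ x) Epoly := by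
      rw [map_mul, Polynomial.aeval_C, map_natCast]
    have haevalE : ((Λ:ℕ): Localization.Away (p:A)) * Polynomial.aeval (φ x) Epoly
        = φ (x^(N+1) * Polynomial.aeval x G) := by
      rw [← hCmul, hCE, ← hG, map_mul, map_pow, Polynomial.aeval_X, haevalG,
        ← map_pow, ← map_mul]
    have herr : ∃ derr, Polynomial.aeval (φ x) Epoly = φ ((p:A)^m * derr) := by
      refine ⟨ui * (cx * Polynomial.aeval x G), ?_⟩
      refine hΛunit.mul_left_cancel ?_
      rw [haevalE, hcx,
        show ((Λ:ℕ): Localization.Away (p:A)) = φ ((Λ:ℕ):A) from (map_natCast φ Λ).symm,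
        ← map_mul]
      congr 1
      have hΛA : ((Λ:ℕ):A) = (p:A)^e * ((u:ℕ):A) := by rw [hΛdef]; push_cast; ring
      have hps : (p:A)^(m+e) = (p:A)^e * (p:A)^m := by rw [pow_add]; ring
      rw [hΛA, hps]
      linear_combination (-((p:A)^e * (p:A)^m * cx * Polynomial.aeval x G)) * hui
    -- the two sums
    have hPz2 : Polynomial.aeval (φ x) ((1+Polynomial.X)^q - 1 : ℚ[X]) = φ z := by
      rw [map_sub, map_one, map_pow, map_add, map_one, Polynomial.aeval_X]
      have h1 : (1: Localization.Away (p:A)) + φ x = φ w := by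
        rw [hxdef, map_sub, map_one]; ring
      rw [h1, ← map_pow, hzdef, map_sub, map_one]
    have hT : Polynomial.aeval (φ x) ((Lpoly N).comp ((1+X)^q - 1))
        = ∑ k ∈ Finset.range N, ((-1: Localization.Away (p:A))^k)
          * Ring.inverse ((k+1:ℕ): Localization.Away (p:A)) * (φ z)^(k+1) := by
      rw [Polynomial.aeval_comp, hPz2, aeval_Lpoly]
    have hS : Polynomial.aeval (φ x) (Lpoly N) = φ ((p:A)^m * sa) := by
      rw [aeval_Lpoly]; exact hsa
    obtain ⟨derr, hderr⟩ := herr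
    have hqterm : Polynomial.aeval (φ x) (Polynomial.C (q:ℚ) * Lpoly N)
        = φ ((q:A) * ((p:A)^m * sa)) := by
      rw [map_mul, Polynomial.aeval_C, hS, map_natCast, ← map_natCast φ q, ← map_mul]
    have hTval : ∑ k ∈ Finset.range N, ((-1: Localization.Away (p:A))^k)
          * Ring.inverse ((k+1:ℕ): Localization.Away (p:A)) * (φ z)^(k+1)
        = φ ((p:A)^m * (derr + (q:A) * sa)) := by
      have hsplitpoly : (Lpoly N).comp ((1+X)^q - 1) = Epoly + Polynomial.C (q:ℚ) * Lpoly N := by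
        rw [hEpoly]; ring
      rw [← hT, hsplitpoly, map_add, hderr, hqterm, ← map_add]
      congr 1
      ring
    -- factor out z from the sum
    have hterm : ∀ k : ℕ, ∃ t : A, 1 ≤ k →
        ((-1: Localization.Away (p:A))^k * Ring.inverse ((k+1:ℕ): Localization.Away (p:A))
          * (φ z)^k) = φ ((p:A) * t) := by
      intro k
      by_cases hk1 : 1 ≤ k
      swap
      · exact ⟨0, fun h => absurd h hk1⟩
      obtain ⟨v, hvdef⟩ : ∃ t, t = (k+1).factorization p := ⟨_, rfl⟩
      have hvk : v ≤ k := hvdef ▸ val_le p hp2 k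
      have hsplitk : p ^ v * ((k+1) / p^v) = k + 1 := hvdef ▸ Nat.ordProj_mul_ordCompl_eq_self _ _
      have hndvd : ¬ p ∣ ((k+1)/p^v) := hvdef ▸ Nat.not_dvd_ordCompl hppr (by omega)
      have hmunit : IsUnit (((k+1)/p^v : ℕ) : A) := A_unit_of_not_dvd p A hndvd
      obtain ⟨mi, hmi⟩ := hmunit.exists_right_inv
      have hku : IsUnit ((k+1:ℕ): Localization.Away (p:A)) := B_nat_unit p A (k+1) (by omega)
      refine ⟨(-1:A)^k * ((p:A)^(2*k - v - 1) * (d^k * mi)), fun _ => ?_⟩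
      have hc1 : ((k+1:ℕ):A) = (p:A)^v * (((k+1)/p^v : ℕ):A) := by
        rw [show ((k+1:ℕ):A) = ((p ^ v * ((k+1) / p^v) : ℕ) : A) by rw [hsplitk]]
        push_cast
        ring
      have hexp : (p:A)^v * ((p:A) * (p:A)^(2*k-v-1)) = (p:A)^(2*k) := by
        calc (p:A)^v * ((p:A) * (p:A)^(2*k-v-1)) = (p:A)^(v + (1 + (2*k-v-1))) := by
              rw [pow_add, pow_add, pow_one]
        _ = (p:A)^(2*k) := by congr 1; omega
      have hA1 : ((k+1:ℕ):A) * ((p:A) * ((-1:A)^k * ((p:A)^(2*k - v - 1) * (d^k * mi))))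
          = (-1:A)^k * z^k := by
        rw [hc1, hz2, mul_pow, ← pow_mul]
        calc ((p:A)^v * (((k+1)/p^v : ℕ):A)) * ((p:A) * ((-1:A)^k * ((p:A)^(2*k - v - 1) * (d^k * mi))))
            = ((-1:A)^k * d^k) * ((p:A)^v * ((p:A) * (p:A)^(2*k-v-1))) * ((((k+1)/p^v : ℕ):A) * mi) := by
              ring
          _ = ((-1:A)^k * d^k) * (p:A)^(2*k) * 1 := by rw [hexp, hmi]
          _ = (-1:A)^k * ((p:A)^(2*k) * d^k) := by ring
      refine hku.mul_left_cancel ?_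
      calc ((k+1:ℕ): Localization.Away (p:A)) * ((-1: Localization.Away (p:A))^k
            * Ring.inverse ((k+1:ℕ): Localization.Away (p:A)) * (φ z)^k)
          = ((-1: Localization.Away (p:A))^k) * (((k+1:ℕ): Localization.Away (p:A))
            * Ring.inverse ((k+1:ℕ): Localization.Away (p:A))) * (φ z)^k := by ring
        _ = ((-1: Localization.Away (p:A))^k) * (φ z)^k := by
            rw [Ring.mul_inverse_cancel _ hku]; ring
        _ = φ ((-1:A)^k * z^k) := by rw [map_mul, map_pow, map_pow, map_neg, map_one]
        _ = φ (((k+1:ℕ):A) * ((p:A) * ((-1:A)^k * ((p:A)^(2*k - v - 1) * (d^k * mi))))) := by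
            rw [hA1]
        _ = ((k+1:ℕ): Localization.Away (p:A))
            * φ ((p:A) * ((-1:A)^k * ((p:A)^(2*k - v - 1) * (d^k * mi)))) := by
            rw [map_mul, map_natCast]
    choose tf htf2 using hterm
    have hN0pos : 0 < N := hN1
    have hfac : ∑ k ∈ Finset.range N, ((-1: Localization.Away (p:A))^k)
          * Ring.inverse ((k+1:ℕ): Localization.Away (p:A)) * (φ z)^(k+1)
        = φ (z * (1 + (p:A) * (∑ k ∈ Finset.Ico 1 N, tf k))) := by
      calc ∑ k ∈ Finset.range N, ((-1: Localization.Away (p:A))^k)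
            * Ring.inverse ((k+1:ℕ): Localization.Away (p:A)) * (φ z)^(k+1)
          = φ z * ∑ k ∈ Finset.range N, ((-1: Localization.Away (p:A))^k)
            * Ring.inverse ((k+1:ℕ): Localization.Away (p:A)) * (φ z)^k := by
            rw [Finset.mul_sum]
            refine Finset.sum_congr rfl fun k _ => ?_
            rw [pow_succ]
            ring
        _ = φ z * (1 + ∑ k ∈ Finset.Ico 1 N, φ ((p:A) * tf k)) := by
            congr 1
            rw [Finset.range_eq_Ico, Finset.sum_eq_sum_Ico_succ_bot hN0pos]
            congr 1
            · simp [Ring.inverse_one]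
            · exact Finset.sum_congr rfl fun k hk => htf2 k (Finset.mem_Ico.mp hk).1
        _ = φ (z * (1 + (p:A) * ∑ k ∈ Finset.Ico 1 N, tf k)) := by
            simp only [map_mul, map_add, map_one, map_sum, Finset.mul_sum]
    have hinjeq : z * (1 + (p:A) * (∑ k ∈ Finset.Ico 1 N, tf k))
        = (p:A)^m * (derr + (q:A) * sa) := by
      apply hinj
      rw [← hfac]
      exact hTval
    exact iterate_div (p:A) z _ _ m hinjeq
  -- conclude
  have hz0 : z = 0 := by
    refine hsep z fun m => ?_
    obtain ⟨dd, hdd⟩ := hmain m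
    rw [Ideal.mem_span_singleton]
    exact ⟨dd, hdd⟩
  have hwq1 : w^(p^(n₀+1)) = 1 := by
    have : w^q - 1 = 0 := hz0
    have h2 : w^q = 1 := by linear_combination this
    rw [← hqdef]
    exact h2
  exact hdesc (n₀+1) hwq1
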